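/- Let A be an associative F-algebra and let φ : M_n(F) → A be a map satisfying φ(X ∘ Y) = φ(X) ∘ φ(Y) for all X, Y ∈ M_n(F). If φ(X) = 0 for some nonzero matrix X ∈ M_n(F), then φ is identically zero on M_n(F). -/

import Mathlib

open Matrix

section Aux

variable {F : Type*} [Field F] {n : ℕ}

private lemma half_smul {M : Type*} [AddCommMonoid M] [Module F M]
    (h2 : (2:F) ≠ 0) (w : M) : (2:F)⁻¹ • (w + w) = w := by
  rw [← two_smul F w, smul_smul, inv_mul_cancel₀ h2, one_smul]

private lemma diag_mul_std (d : Fin n → F) (a b : Fin n) :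
    diagonal d * Matrix.single a b (1:F) = Matrix.single a b (d a) := by
  ext i k
  rw [diagonal_mul]
  simp only [Matrix.single, of_apply]
  split_ifs with h
  · rcases h with ⟨rfl, rfl⟩; simp
  · simp

private lemma std_mul_diag (d : Fin n → F) (a b : Fin n) :
    Matrix.single a b (1:F) * diagonal d = Matrix.single a b (d b) := by
  ext i k
  rw [mul_diagonal]
  simp only [Matrix.single, of_apply]
  split_ifs with h
  · rcases h with ⟨rfl, rfl⟩; simp
  · simp

/-- diagonal 0/1 indicator matrix of a finset -/
private def Pm (s : Finset (Fin n)) : Matrix (Fin n) (Fin n) F :=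
  diagonal (fun a => if a ∈ s then (1:F) else 0)

private lemma Pm_mul_std_mem {s : Finset (Fin n)} {a : Fin n} (ha : a ∈ s) (b : Fin n) :
    (Pm s : Matrix (Fin n) (Fin n) F) * Matrix.single a b (1:F) = Matrix.single a b 1 := by
  rw [Pm, diag_mul_std, if_pos ha]

private lemma Pm_mul_std_not {s : Finset (Fin n)} {a : Fin n} (ha : a ∉ s) (b : Fin n) :
    (Pm s : Matrix (Fin n) (Fin n) F) * Matrix.single a b (1:F) = 0 := by
  rw [Pm, diag_mul_std, if_neg ha, single_zero]

private lemma std_mul_Pm_mem {s : Finset (Fin n)} {b : Fin n} (hb : b ∈ s) (a : Fin n) :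
    Matrix.single a b (1:F) * (Pm s : Matrix (Fin n) (Fin n) F) = Matrix.single a b 1 := by
  rw [Pm, std_mul_diag, if_pos hb]

private lemma std_mul_Pm_not {s : Finset (Fin n)} {b : Fin n} (hb : b ∉ s) (a : Fin n) :
    Matrix.single a b (1:F) * (Pm s : Matrix (Fin n) (Fin n) F) = 0 := by
  rw [Pm, std_mul_diag, if_neg hb, single_zero]

private lemma Pm_mul_Pm (s : Finset (Fin n)) :
    (Pm s : Matrix (Fin n) (Fin n) F) * Pm s = Pm s := by
  rw [Pm, diagonal_mul_diagonal]
  refine congrArg diagonal (funext fun a => ?_)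
  split_ifs <;> ring

private lemma Pm_insert {s : Finset (Fin n)} {m : Fin n} (hm : m ∉ s) :
    (Pm (insert m s) : Matrix (Fin n) (Fin n) F) = Pm s + Matrix.single m m 1 := by
  ext p q
  rw [Matrix.add_apply]
  by_cases hpq : p = q
  · subst hpq
    by_cases hpm : p = m
    · subst hpm
      simp [Pm, hm]
    · have h0 : Matrix.single m m (1:F) p p = 0 :=
        single_apply_of_row_ne (Ne.symm hpm) _ _ _
      rw [h0, add_zero]
      simp [Pm, Finset.mem_insert, hpm]
  · have h0 : Matrix.single m m (1:F) p q = 0 := by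
      by_cases hpm : p = m
      · subst hpm
        exact single_apply_of_col_ne _ _ hpq 1
      · exact single_apply_of_row_ne (Ne.symm hpm) _ _ _
    rw [h0, add_zero, Pm, Pm, diagonal_apply_ne _ hpq, diagonal_apply_ne _ hpq]

private lemma Pm_singleton (j : Fin n) :
    (Pm {j} : Matrix (Fin n) (Fin n) F) = Matrix.single j j 1 := by
  have h1 : ({j} : Finset (Fin n)) = insert j ∅ := rfl
  rw [h1, Pm_insert (Finset.notMem_empty j)]
  have h0 : (Pm (∅ : Finset (Fin n)) : Matrix (Fin n) (Fin n) F) = 0 := by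
    ext p q; simp [Pm, diagonal]
  rw [h0, zero_add]

private lemma Pm_univ : (Pm (Finset.univ : Finset (Fin n)) : Matrix (Fin n) (Fin n) F) = 1 := by
  ext p q; simp [Pm, Matrix.one_apply, diagonal]

end Aux

theorem stmt_7 {F : Type*} [Field F] (h2 : (2 : F) ≠ 0) (n : ℕ)
    {A : Type*} [Ring A] [Algebra F A]
    (φ : Matrix (Fin n) (Fin n) F → A)
    (hφ : ∀ X Y : Matrix (Fin n) (Fin n) F,
      φ ((2 : F)⁻¹ • (X * Y + Y * X)) = (2 : F)⁻¹ • (φ X * φ Y + φ Y * φ X))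
    (X : Matrix (Fin n) (Fin n) F) (hX : X ≠ 0) (hφX : φ X = 0) :
    ∀ Y : Matrix (Fin n) (Fin n) F, φ Y = 0 := by
  -- closure of the zero set of φ under Jordan multiplication
  have hstep : ∀ W : Matrix (Fin n) (Fin n) F, φ W = 0 →
      ∀ Y : Matrix (Fin n) (Fin n) F, φ ((2:F)⁻¹ • (W * Y + Y * W)) = 0 := by
    intro W hW Y
    rw [hφ, hW]
    simp
  -- a nonzero entry of X
  obtain ⟨i, j, hc⟩ : ∃ i j, X i j ≠ 0 := by
    by_contra h
    push_neg at h
    exact hX (by ext p q; simpa using h p q)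
  -- Step A: a matrix Z with φ Z = 0 and Z j j ≠ 0
  obtain ⟨Z, hZdef⟩ : ∃ Z : Matrix (Fin n) (Fin n) F,
      Z = (2:F)⁻¹ • (X * Matrix.single j i (1:F) + Matrix.single j i (1:F) * X) := ⟨_, rfl⟩
  have hZ0 : φ Z = 0 := by rw [hZdef]; exact hstep X hφX _
  have hEX : (Matrix.single j i (1:F) * X) j j = X i j := by
    rw [single_mul_apply_same, one_mul]
  have he : Z j j ≠ 0 := by
    by_cases hij : i = j
    · subst hij
      have hXE : (X * Matrix.single i i (1:F)) i i = X i i := by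
        rw [mul_single_apply_same, mul_one]
      have hZii : Z i i = X i i := by
        rw [hZdef, Matrix.smul_apply, Matrix.add_apply, hXE, hEX, smul_eq_mul,
          ← smul_eq_mul, half_smul h2]
      rw [hZii]; exact hc
    · have hXE : (X * Matrix.single j i (1:F)) j j = 0 :=
        mul_single_apply_of_ne _ _ _ _ _ (fun h => hij h.symm) _
      have hZjj : Z j j = (2:F)⁻¹ * X i j := by
        rw [hZdef, Matrix.smul_apply, Matrix.add_apply, hXE, hEX, smul_eq_mul, zero_add]
      rw [hZjj]
      exact mul_ne_zero (inv_ne_zero h2) hc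
  -- Step B: clean up row/column j, obtaining φ (E jj) = 0
  set d : Fin n → F := fun a => if a = j then (1:F) else -1 with hd
  have hdj : d j = 1 := by rw [hd]; simp
  have hda : ∀ a, a ≠ j → d a = -1 := by intro a ha; rw [hd]; simp [ha]
  obtain ⟨M, hMdef⟩ : ∃ M : Matrix (Fin n) (Fin n) F,
      M = (2:F)⁻¹ • (Z * diagonal d + diagonal d * Z) := ⟨_, rfl⟩
  have hM0 : φ M = 0 := by rw [hMdef]; exact hstep Z hZ0 _
  have hMcol : ∀ a, M a j = if a = j then Z j j else 0 := by
    intro a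
    rw [hMdef, Matrix.smul_apply, Matrix.add_apply, mul_diagonal, diagonal_mul, smul_eq_mul, hdj]
    by_cases haj : a = j
    · subst haj
      rw [hdj, if_pos rfl, mul_one, one_mul, ← smul_eq_mul, half_smul h2]
    · rw [hda a haj, if_neg haj]
      ring
  have hMrow : ∀ b, M j b = if b = j then Z j j else 0 := by
    intro b
    rw [hMdef, Matrix.smul_apply, Matrix.add_apply, mul_diagonal, diagonal_mul, smul_eq_mul, hdj]
    by_cases hbj : b = j
    · subst hbj
      rw [hdj, if_pos rfl, mul_one, one_mul, ← smul_eq_mul, half_smul h2]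
    · rw [hda b hbj, if_neg hbj]
      ring
  have hME : M * Matrix.single j j (1:F) = Z j j • Matrix.single j j (1:F) := by
    ext a b
    rw [Matrix.smul_apply, smul_eq_mul]
    by_cases hbj : b = j
    · rw [hbj, mul_single_apply_same, mul_one, hMcol a]
      by_cases haj : a = j
      · rw [if_pos haj, haj, single_apply_same, mul_one]
      · rw [if_neg haj, single_apply_of_row_ne (Ne.symm haj) _ _, mul_zero]
    · rw [mul_single_apply_of_ne _ _ _ _ _ hbj,
        single_apply_of_col_ne _ _ (Ne.symm hbj), mul_zero]
  have hEM : Matrix.single j j (1:F) * M = Z j j • Matrix.single j j (1:F) := by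
    ext a b
    rw [Matrix.smul_apply, smul_eq_mul]
    by_cases haj : a = j
    · rw [haj, single_mul_apply_same, one_mul, hMrow b]
      by_cases hbj : b = j
      · rw [if_pos hbj, hbj, single_apply_same, mul_one]
      · rw [if_neg hbj, single_apply_of_col_ne _ _ (Ne.symm hbj), mul_zero]
    · rw [single_mul_apply_of_ne _ _ _ _ _ haj,
        single_apply_of_row_ne (Ne.symm haj) _ _, mul_zero]
  have hE0 : φ (Matrix.single j j (1:F)) = 0 := by
    have h := hstep M hM0 ((Z j j)⁻¹ • Matrix.single j j (1:F))
    rw [mul_smul_comm, smul_mul_assoc, hME, hEM, smul_smul, inv_mul_cancel₀ he,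
      one_smul, half_smul h2] at h
    exact h
  -- Step C: grow from E jj to the identity along diagonal indicator matrices
  have hgrow : ∀ (s : Finset (Fin n)) (a : Fin n), a ∈ s → ∀ m, m ∉ s →
      φ (Pm s) = 0 → φ (Pm (insert m s)) = 0 := by
    intro s a ha m hm h0
    have ham : a ≠ m := fun h => hm (h ▸ ha)
    have hmerase : m ∉ s.erase a := fun h => hm (Finset.mem_of_mem_erase h)
    have haerase : a ∉ s.erase a := Finset.notMem_erase a s
    set Q : Matrix (Fin n) (Fin n) F := Pm (s.erase a) with hQdef
    set Ea : Matrix (Fin n) (Fin n) F := Matrix.single a a 1 with hEadef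
    set E : Matrix (Fin n) (Fin n) F := Matrix.single a m 1 with hEdef
    set E' : Matrix (Fin n) (Fin n) F := Matrix.single m a 1 with hE'def
    set Fm : Matrix (Fin n) (Fin n) F := Matrix.single m m 1 with hFmdef
    have hPsQ : (Pm s : Matrix (Fin n) (Fin n) F) = Q + Ea := by
      have h1 : insert a (s.erase a) = s := Finset.insert_erase ha
      rw [hQdef, hEadef, ← Pm_insert haerase, h1]
    -- first Jordan multiplication : reach Pm s + E + E'
    have h1 : φ (Pm s + E + E') = 0 := by
      have h := hstep (Pm s) h0 (Pm s + (2:F) • (E + E'))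
      have hPsE : (Pm s : Matrix (Fin n) (Fin n) F) * E = E := Pm_mul_std_mem ha m
      have hPsE' : (Pm s : Matrix (Fin n) (Fin n) F) * E' = 0 := Pm_mul_std_not hm a
      have hEPs : E * (Pm s : Matrix (Fin n) (Fin n) F) = 0 := std_mul_Pm_not hm a
      have hE'Ps : E' * (Pm s : Matrix (Fin n) (Fin n) F) = E' := std_mul_Pm_mem ha m
      have key : (2:F)⁻¹ • (Pm s * (Pm s + (2:F) • (E + E')) +
          (Pm s + (2:F) • (E + E')) * Pm s) = Pm s + E + E' := by
        rw [mul_add, add_mul, mul_smul_comm, smul_mul_assoc, Pm_mul_Pm,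
          mul_add, add_mul, hPsE, hPsE', hEPs, hE'Ps, add_zero, zero_add]
        rw [show (Pm s + (2:F) • E) + (Pm s + (2:F) • E') =
          ((Pm s + E + E') + (Pm s + E + E') :  Matrix (Fin n) (Fin n) F) by
            rw [two_smul, two_smul]; abel]
        exact half_smul h2 _
      rwa [key] at h
    -- second Jordan multiplication : reach Pm (insert m s)
    have hQQ : Q * Q = Q := Pm_mul_Pm _
    have hQEa : Q * Ea = 0 := Pm_mul_std_not haerase a
    have hQE : Q * E = 0 := Pm_mul_std_not haerase m
    have hQE' : Q * E' = 0 := Pm_mul_std_not hmerase a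
    have hQF : Q * Fm = 0 := Pm_mul_std_not hmerase m
    have hEaQ : Ea * Q = 0 := std_mul_Pm_not haerase a
    have hEQ : E * Q = 0 := std_mul_Pm_not hmerase a
    have hE'Q : E' * Q = 0 := std_mul_Pm_not haerase m
    have hFQ : Fm * Q = 0 := std_mul_Pm_not hmerase m
    have hEaE : Ea * E = E := by
      rw [hEadef, hEdef, single_mul_single_same, one_mul]
    have hEaE' : Ea * E' = 0 := single_mul_single_of_ne _ _ _ _ ham _
    have hEaF : Ea * Fm = 0 := single_mul_single_of_ne _ _ _ _ ham _
    have hEEa : E * Ea = 0 := single_mul_single_of_ne _ _ _ _ ham.symm _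
    have hEE : E * E = 0 := single_mul_single_of_ne _ _ _ _ ham.symm _
    have hEE' : E * E' = Ea := by
      rw [hEdef, hE'def, hEadef, single_mul_single_same, one_mul]
    have hEF : E * Fm = E := by
      rw [hEdef, hFmdef, single_mul_single_same, one_mul]
    have hE'Ea : E' * Ea = E' := by
      rw [hE'def, hEadef, single_mul_single_same, one_mul]
    have hE'E : E' * E = Fm := by
      rw [hE'def, hEdef, hFmdef, single_mul_single_same, one_mul]
    have hE'E' : E' * E' = 0 := single_mul_single_of_ne _ _ _ _ ham _
    have hE'F : E' * Fm = 0 := single_mul_single_of_ne _ _ _ _ ham _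
    have hFEa : Fm * Ea = 0 := single_mul_single_of_ne _ _ _ _ ham.symm _
    have hFE : Fm * E = 0 := single_mul_single_of_ne _ _ _ _ ham.symm _
    have hFE' : Fm * E' = E' := by
      rw [hFmdef, hE'def, single_mul_single_same, one_mul]
    set B : Matrix (Fin n) (Fin n) F := Q + E + E' - Fm with hBdef
    have hMB : (Pm s + E + E') * B = (Q + Ea) + Fm := by
      rw [hPsQ, hBdef]
      simp only [mul_sub, sub_mul, mul_add, add_mul]
      simp only [hQQ, hQEa, hQE, hQE', hQF, hEaQ, hEaE, hEaE', hEaF,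
        hEQ, hEEa, hEE, hEE', hEF, hE'Q, hE'Ea, hE'E, hE'E', hE'F]
      abel
    have hBM : B * (Pm s + E + E') = (Q + Ea) + Fm := by
      rw [hPsQ, hBdef]
      simp only [mul_sub, sub_mul, mul_add, add_mul]
      simp only [hQQ, hQEa, hQE, hQE', hQF, hEaQ, hEaE, hEaE', hEaF,
        hEQ, hEEa, hEE, hEE', hEF, hE'Q, hE'Ea, hE'E, hE'E', hE'F,
        hFQ, hFEa, hFE, hFE']
      abel
    have h := hstep (Pm s + E + E') h1 B
    rw [hMB, hBM, half_smul h2] at h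
    rwa [Pm_insert hm, hPsQ]
  have hPall : ∀ s : Finset (Fin n), φ (Pm (insert j s)) = 0 := by
    intro s
    induction s using Finset.induction_on with
    | empty =>
        rw [show (insert j (∅ : Finset (Fin n))) = {j} from rfl, Pm_singleton]
        exact hE0
    | @insert m s' hm' ih =>
        rcases eq_or_ne m j with rfl | hmj
        · rwa [Finset.insert_comm, Finset.insert_idem]
        · rw [Finset.insert_comm]
          exact hgrow (insert j s') j (Finset.mem_insert_self j s') m
            (by simp [Finset.mem_insert, hmj, hm']) ih
  have hOne : φ (1 : Matrix (Fin n) (Fin n) F) = 0 := by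
    have h := hPall (Finset.univ.erase j)
    rwa [Finset.insert_erase (Finset.mem_univ j), Pm_univ] at h
  intro Y
  have h := hstep 1 hOne Y
  rwa [one_mul, mul_one, half_smul h2] at h
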